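/- Let 𝔤 be a stratified real Lie algebra with dim 𝔤 ≥ 2, and let L = 𝔤 ⋊ ℝ·D_L be the semidirect product of 𝔤 by its grading derivation. Then every nilpotent Lie subalgebra 𝔥 of L with dim 𝔥 = dim L − 1 is equal to 𝔤 (viewed as an ideal of L). -/

import Mathlib

open Module

/-- The span of all brackets `⁅x, y⁆` with `x ∈ A` and `y ∈ B`. -/
def bracketSpan {L : Type*} [LieRing L] [LieAlgebra ℝ L]
    (A B : Submodule ℝ L) : Submodule ℝ L :=
  Submodule.span ℝ {z | ∃ x ∈ A, ∃ y ∈ B, ⁅x, y⁆ = z}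

/-- `L = 𝔤 ⋊ ℝ·D` is the semidirect product of the stratified Lie algebra `𝔤 = g`
(with stratification `V 1 ⊕ ⋯ ⊕ V s`, `g` a Lie ideal of `L`) by its grading
derivation: `L = g ⊕ ℝ·D` as vector spaces and `⁅D, X⁆ = j • X` for `X ∈ V j`. -/
structure IsSemidirectTD {L : Type*} [LieRing L] [LieAlgebra ℝ L]
    (s : ℕ) (V : ℕ → Submodule ℝ L) (g : LieIdeal ℝ L) (D : L) : Prop where
  s_pos : 0 < s
  top_ne_bot : V s ≠ ⊥
  eq_bot_of_notin : ∀ j : ℕ, j = 0 ∨ s < j → V j = ⊥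
  independent : iSupIndep V
  sup_eq : ⨆ j, V j = (g : Submodule ℝ L)
  bracket_eq : ∀ j : ℕ, 1 ≤ j → j ≤ s → bracketSpan (V j) (V 1) = V (j + 1)
  D_notin : D ∉ (g : Submodule ℝ L)
  compl_sup : (g : Submodule ℝ L) ⊔ (ℝ ∙ D) = ⊤
  compl_inf : (g : Submodule ℝ L) ⊓ (ℝ ∙ D) = ⊥
  grading : ∀ j : ℕ, 1 ≤ j → j ≤ s → ∀ X ∈ V j, ⁅D, X⁆ = (j : ℝ) • X

section Aux

variable {L : Type*} [LieRing L] [LieAlgebra ℝ L]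
  {s : ℕ} {V : ℕ → Submodule ℝ L} {g : LieIdeal ℝ L} {D : L}

/-- The filtration `F j = ⨆ k ≥ j, V k`. -/
def Fsup (V : ℕ → Submodule ℝ L) (j : ℕ) : Submodule ℝ L :=
  ⨆ k, ⨆ _ : j ≤ k, V k

lemma V_le_Fsup {j k : ℕ} (h : j ≤ k) : V k ≤ Fsup V j :=
  le_iSup₂ (f := fun k (_ : j ≤ k) => V k) k h

lemma Fsup_antitone {j j' : ℕ} (h : j ≤ j') : Fsup V j' ≤ Fsup V j :=
  iSup₂_le fun k hk => V_le_Fsup (h.trans hk)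

lemma Fsup_bot (hTD : IsSemidirectTD s V g D) : Fsup V (s + 1) = ⊥ :=
  le_bot_iff.mp <| iSup₂_le fun k hk =>
    (hTD.eq_bot_of_notin k (Or.inr hk)).le

lemma g_le_Fsup_one (hTD : IsSemidirectTD s V g D) :
    (g : Submodule ℝ L) ≤ Fsup V 1 := by
  rw [← hTD.sup_eq]
  refine iSup_le fun k => ?_
  rcases Nat.eq_zero_or_pos k with rfl | hk
  · rw [hTD.eq_bot_of_notin 0 (Or.inl rfl)]; exact bot_le
  · exact V_le_Fsup hk

lemma Fsup_zero_le_one (hTD : IsSemidirectTD s V g D) :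
    Fsup V 0 ≤ Fsup V 1 := by
  refine iSup₂_le fun k _ => ?_
  rcases Nat.eq_zero_or_pos k with rfl | hk
  · rw [hTD.eq_bot_of_notin 0 (Or.inl rfl)]; exact bot_le
  · exact V_le_Fsup hk

/-- Brackets of strata land in higher strata: `⁅V i, V j⁆ ⊆ V (i+j)`. -/
lemma bracket_strata (hTD : IsSemidirectTD s V g D) :
    ∀ j i : ℕ, ∀ x ∈ V i, ∀ y ∈ V j, ⁅x, y⁆ ∈ V (i + j) := by
  intro j
  induction j using Nat.strong_induction_on with
  | _ j ih =>
    match j with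
    | 0 =>
      intro i x hx y hy
      rw [hTD.eq_bot_of_notin 0 (Or.inl rfl), Submodule.mem_bot] at hy
      subst hy; simp
    | 1 =>
      intro i x hx y hy
      rcases Nat.eq_zero_or_pos i with rfl | hip
      · rw [hTD.eq_bot_of_notin 0 (Or.inl rfl), Submodule.mem_bot] at hx
        subst hx; simp
      rcases le_or_gt i s with his | hsi
      · rw [← hTD.bracket_eq i hip his]
        exact Submodule.subset_span ⟨x, hx, y, hy, rfl⟩
      · rw [hTD.eq_bot_of_notin i (Or.inr hsi), Submodule.mem_bot] at hx
        subst hx; simp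
    | (j + 2) =>
      intro i x hx y hy
      rcases le_or_gt (j + 2) s with hjs | hsj
      swap
      · rw [hTD.eq_bot_of_notin (j + 2) (Or.inr hsj), Submodule.mem_bot] at hy
        subst hy; simp
      have hj1 : 1 ≤ j + 1 := Nat.le_add_left 1 j
      have hj1s : j + 1 ≤ s := by omega
      rw [← hTD.bracket_eq (j + 1) hj1 hj1s] at hy
      refine Submodule.span_induction ?_ ?_ ?_ ?_ hy
      · rintro z ⟨a, ha, b, hb, rfl⟩
        rw [leibniz_lie]
        refine Submodule.add_mem _ ?_ ?_
        · -- ⁅⁅x,a⁆,b⁆ ∈ V (i + (j+1) + 1) = V (i + (j+2))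
          have h1 : ⁅x, a⁆ ∈ V (i + (j + 1)) :=
            ih (j + 1) (by omega) i x hx a ha
          exact ih 1 (by omega) (i + (j + 1)) _ h1 b hb
        · -- ⁅a, ⁅x,b⁆⁆ ∈ V ((j+1) + (i+1)) = V (i + (j+2))
          have h1 : ⁅x, b⁆ ∈ V (i + 1) := ih 1 (by omega) i x hx b hb
          have h2 : ⁅a, ⁅x, b⁆⁆ ∈ V ((i + 1) + (j + 1)) := by
            have := ih (j + 1) (by omega) (i + 1) _ h1 a ha
            have e : ⁅a, ⁅x, b⁆⁆ = -⁅⁅x, b⁆, a⁆ := (lie_skew _ _).symm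
            rw [e]
            exact Submodule.neg_mem _ this
          have e : (i + 1) + (j + 1) = i + (j + 2) := by omega
          rwa [e] at h2
      · simp
      · intro a b _ _ ha hb
        rw [lie_add]; exact Submodule.add_mem _ ha hb
      · intro c a _ ha
        rw [lie_smul]; exact Submodule.smul_mem _ c ha

/-- `ad D` preserves the filtration. -/
lemma adD_Fsup (hTD : IsSemidirectTD s V g D) {j : ℕ} {Y : L}
    (hY : Y ∈ Fsup V j) : ⁅D, Y⁆ ∈ Fsup V j := by
  have : Fsup V j ≤ Submodule.comap (LieModule.toEnd ℝ L L D) (Fsup V j) := by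
    refine iSup₂_le fun k hk => ?_
    intro y hy
    rcases Nat.eq_zero_or_pos k with rfl | hk1
    · rw [hTD.eq_bot_of_notin 0 (Or.inl rfl), Submodule.mem_bot] at hy
      subst hy; simp
    rcases le_or_gt k s with hks | hsk
    · have : ⁅D, y⁆ = (k : ℝ) • y := hTD.grading k hk1 hks y hy
      show ⁅D, y⁆ ∈ Fsup V j
      rw [this]
      exact Submodule.smul_mem _ _ (V_le_Fsup hk hy)
    · rw [hTD.eq_bot_of_notin k (Or.inr hsk), Submodule.mem_bot] at hy
      subst hy
      show ⁅D, (0 : L)⁆ ∈ Fsup V j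
      simp
  exact this hY

/-- `ad X` for `X ∈ g` raises the filtration. -/
lemma adg_Fsup (hTD : IsSemidirectTD s V g D) {j : ℕ} {X Y : L}
    (hX : X ∈ (g : Submodule ℝ L)) (hY : Y ∈ Fsup V j) :
    ⁅X, Y⁆ ∈ Fsup V (j + 1) := by
  -- first for X in a single stratum
  have key : ∀ i : ℕ, ∀ X ∈ V i, ⁅X, Y⁆ ∈ Fsup V (j + 1) := by
    intro i X hXi
    rcases Nat.eq_zero_or_pos i with rfl | hi
    · rw [hTD.eq_bot_of_notin 0 (Or.inl rfl), Submodule.mem_bot] at hXi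
      subst hXi; simp
    have : Fsup V j ≤ Submodule.comap (LieModule.toEnd ℝ L L X) (Fsup V (j + 1)) := by
      refine iSup₂_le fun k hk => ?_
      intro y hy
      have hb : ⁅X, y⁆ ∈ V (i + k) := bracket_strata hTD k i X hXi y hy
      exact V_le_Fsup (by omega) hb
    exact this hY
  rw [← hTD.sup_eq] at hX
  refine Submodule.iSup_induction V (motive := fun z => ⁅z, Y⁆ ∈ Fsup V (j + 1)) hX key ?_ ?_
  · simp
  · intro a b ha hb
    rw [add_lie]; exact Submodule.add_mem _ ha hb

/-- Key injectivity: `ad (D + X)` has trivial kernel on the filtration. -/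
lemma ad_inj_aux (hTD : IsSemidirectTD s V g D) {X : L}
    (hX : X ∈ (g : Submodule ℝ L)) :
    ∀ n : ℕ, ∀ Y ∈ Fsup V (s + 1 - n), ⁅D + X, Y⁆ = 0 → Y = 0 := by
  intro n
  induction n with
  | zero =>
    intro Y hY _
    rw [Nat.sub_zero, Fsup_bot hTD, Submodule.mem_bot] at hY
    exact hY
  | succ n ihn =>
    intro Y hY hbr
    rcases le_or_gt (s + 1) n with hn | hn
    · -- indices both 0
      have e : s + 1 - (n + 1) = s + 1 - n := by omega
      rw [e] at hY
      exact ihn Y hY hbr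
    rcases le_or_gt (s + 1) (n + 1) with hn1 | hn1
    · -- s + 1 - (n+1) = 0, s + 1 - n = 1
      have e0 : s + 1 - (n + 1) = 0 := by omega
      have e1 : s + 1 - n = 1 := by omega
      rw [e0] at hY
      exact ihn Y (by rw [e1]; exact Fsup_zero_le_one hTD hY) hbr
    -- main case: m := s - n ≥ 1
    set m := s - n with hm
    have hm1 : 1 ≤ m := by omega
    have hms : m ≤ s := by omega
    have em : s + 1 - (n + 1) = m := by omega
    have em1 : s + 1 - n = m + 1 := by omega
    rw [em] at hY
    -- decompose F m = V m ⊔ F (m + 1)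
    have hdecomp : Fsup V m = V m ⊔ Fsup V (m + 1) := by
      apply le_antisymm
      · refine iSup₂_le fun k hk => ?_
        rcases eq_or_lt_of_le hk with rfl | hk'
        · exact le_sup_left
        · exact le_trans (V_le_Fsup hk') le_sup_right
      · exact sup_le (V_le_Fsup le_rfl) (Fsup_antitone (Nat.le_succ m))
    rw [hdecomp] at hY
    obtain ⟨y₁, hy₁, y₂, hy₂, hsum⟩ := Submodule.mem_sup.mp hY
    -- compute the bracket
    have hb1 : ⁅D, y₁⁆ = (m : ℝ) • y₁ := hTD.grading m hm1 hms y₁ hy₁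
    have hz : ⁅D, y₂⁆ + ⁅X, Y⁆ ∈ Fsup V (m + 1) := by
      refine Submodule.add_mem _ (adD_Fsup hTD hy₂) ?_
      exact adg_Fsup hTD hX (hdecomp ▸ hY)
    have hexp : ⁅D + X, Y⁆ = (m : ℝ) • y₁ + (⁅D, y₂⁆ + ⁅X, Y⁆) := by
      rw [add_lie, ← hsum, lie_add, hb1, hsum]
      abel
    rw [hexp] at hbr
    have hmem : (m : ℝ) • y₁ ∈ V m ⊓ Fsup V (m + 1) := by
      constructor
      · exact Submodule.smul_mem _ _ hy₁
      · have : (m : ℝ) • y₁ = -(⁅D, y₂⁆ + ⁅X, Y⁆) := by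
          rw [← add_eq_zero_iff_eq_neg]; exact hbr
        rw [this]
        exact Submodule.neg_mem _ hz
    have hdisj : V m ⊓ Fsup V (m + 1) = ⊥ := by
      have h1 : Fsup V (m + 1) ≤ ⨆ k, ⨆ _ : k ≠ m, V k := by
        refine iSup₂_le fun k hk => ?_
        exact le_iSup₂ (f := fun k (_ : k ≠ m) => V k) k (by omega)
      have := (hTD.independent m).mono_right h1
      exact this.eq_bot
    rw [hdisj, Submodule.mem_bot] at hmem
    have hy10 : y₁ = 0 := by
      have : (m : ℝ) ≠ 0 := by positivity
      exact (smul_eq_zero.mp hmem).resolve_left this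
    subst hy10
    rw [zero_add] at hsum
    subst hsum
    exact ihn y₂ (em1 ▸ hy₂) (hexp.trans hbr)

lemma ad_inj (hTD : IsSemidirectTD s V g D) {X Y : L}
    (hX : X ∈ (g : Submodule ℝ L)) (hY : Y ∈ (g : Submodule ℝ L))
    (hbr : ⁅D + X, Y⁆ = 0) : Y = 0 := by
  have := ad_inj_aux hTD hX s Y ?_ hbr
  · exact this
  · have e : s + 1 - s = 1 := by omega
    rw [e]
    exact g_le_Fsup_one hTD hY

end Aux

/-- Every nilpotent Lie subalgebra of `L = 𝔤 ⋊ ℝ·D` of codimension one equals `𝔤`. -/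
theorem stmt0 {L : Type*} [LieRing L] [LieAlgebra ℝ L] [FiniteDimensional ℝ L]
    (s : ℕ) (V : ℕ → Submodule ℝ L) (g : LieIdeal ℝ L) (D : L)
    (hTD : IsSemidirectTD s V g D)
    (hdim : 2 ≤ finrank ℝ (g : Submodule ℝ L))
    (H : LieSubalgebra ℝ L) (hnil : LieRing.IsNilpotent H)
    (hcodim : finrank ℝ H = finrank ℝ L - 1) :
    H.toSubmodule = (g : Submodule ℝ L) := by
  have hD0 : D ≠ 0 := fun h => hTD.D_notin (h ▸ (g : Submodule ℝ L).zero_mem)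
  -- dimension count: finrank L = finrank g + 1
  have hL : finrank ℝ L = finrank ℝ (g : Submodule ℝ L) + 1 := by
    have := Submodule.finrank_sup_add_finrank_inf_eq (g : Submodule ℝ L) (ℝ ∙ D)
    rw [hTD.compl_sup, hTD.compl_inf, finrank_top, finrank_bot, add_zero,
      finrank_span_singleton hD0] at this
    exact this
  have hH : finrank ℝ H = finrank ℝ (g : Submodule ℝ L) := by
    rw [hcodim, hL]; omega
  by_cases hle : H.toSubmodule ≤ (g : Submodule ℝ L)
  · exact Submodule.eq_of_le_of_finrank_le hle (le_of_eq hH.symm)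
  -- otherwise, find w ∈ H with w ∉ g, normalize to D + X form
  obtain ⟨w, hwH, hwg⟩ := SetLike.not_le_iff_exists.mp hle
  have hw_top : w ∈ (g : Submodule ℝ L) ⊔ (ℝ ∙ D) := by
    rw [hTD.compl_sup]; exact Submodule.mem_top
  obtain ⟨X₀, hX₀, d, hd, hsum⟩ := Submodule.mem_sup.mp hw_top
  obtain ⟨c, rfl⟩ := Submodule.mem_span_singleton.mp hd
  have hc : c ≠ 0 := by
    rintro rfl
    apply hwg
    rw [← hsum, zero_smul, add_zero]
    exact hX₀
  -- w' = D + X ∈ H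
  set X : L := c⁻¹ • X₀ with hXdef
  have hXg : X ∈ (g : Submodule ℝ L) := Submodule.smul_mem _ _ hX₀
  have hw' : D + X ∈ H := by
    have : D + X = c⁻¹ • w := by
      rw [← hsum, smul_add, smul_smul, inv_mul_cancel₀ hc, one_smul, hXdef]
      abel
    rw [this]
    exact H.smul_mem _ hwH
  -- find nonzero Y ∈ H ⊓ g
  have hHg_pos : 0 < finrank ℝ ↥(H.toSubmodule ⊓ (g : Submodule ℝ L)) := by
    have hsup := Submodule.finrank_sup_add_finrank_inf_eq H.toSubmodule (g : Submodule ℝ L)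
    have hsup_le : finrank ℝ ↥(H.toSubmodule ⊔ (g : Submodule ℝ L)) ≤ finrank ℝ L :=
      Submodule.finrank_le _
    have hHfin : finrank ℝ ↥H.toSubmodule = finrank ℝ (g : Submodule ℝ L) := hH
    omega
  have hne_bot : H.toSubmodule ⊓ (g : Submodule ℝ L) ≠ ⊥ := by
    intro h
    rw [h] at hHg_pos
    simp [finrank_bot] at hHg_pos
  obtain ⟨Y, hYmem, hY0⟩ := Submodule.exists_mem_ne_zero_of_ne_bot hne_bot
  have hYH : Y ∈ H := hYmem.1
  have hYg : Y ∈ (g : Submodule ℝ L) := hYmem.2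
  -- nilpotency of ad (D + X) on H
  have had : IsNilpotent (LieAlgebra.ad ℝ H (⟨D + X, hw'⟩ : H)) :=
    LieModule.isNilpotent_toEnd_of_isNilpotent ℝ H H _
  obtain ⟨n, hn⟩ := had
  -- transfer to L
  have htrans : ∀ k : ℕ, ∀ z : H,
      (((LieAlgebra.ad ℝ H (⟨D + X, hw'⟩ : H)) ^ k) z : L)
        = ((LieAlgebra.ad ℝ L (D + X)) ^ k) (z : L) := by
    intro k
    induction k with
    | zero => intro z; simp
    | succ k ihk =>
      intro z
      rw [pow_succ, pow_succ]
      have : ((LieAlgebra.ad ℝ H (⟨D + X, hw'⟩ : H)) z : L)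
          = (LieAlgebra.ad ℝ L (D + X)) (z : L) := rfl
      simp only [Module.End.mul_apply]
      rw [ihk ((LieAlgebra.ad ℝ H (⟨D + X, hw'⟩ : H)) z), this]
  have hpowY : ((LieAlgebra.ad ℝ L (D + X)) ^ n) Y = 0 := by
    have := htrans n ⟨Y, hYH⟩
    rw [hn] at this
    simpa using this.symm
  -- injectivity of ad (D + X) on g kills Y
  have hinj : ∀ k : ℕ, ∀ Z ∈ (g : Submodule ℝ L),
      ((LieAlgebra.ad ℝ L (D + X)) ^ k) Z = 0 → Z = 0 := by
    intro k
    induction k with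
    | zero => intro Z _ h; simpa using h
    | succ k ihk =>
      intro Z hZ h
      rw [pow_succ, Module.End.mul_apply, LieAlgebra.ad_apply] at h
      have hbrg : ⁅D + X, Z⁆ ∈ (g : Submodule ℝ L) := g.lie_mem hZ
      have hbz : ⁅D + X, Z⁆ = 0 := ihk _ hbrg h
      exact ad_inj hTD hXg hZ hbz
  exact absurd (hinj n Y hYg hpowY) hY0
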